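/- arXiv:2106.01019 — 2 statements merged into one kernel-verified Lean document; each statement's English description precedes it below -/
import Mathlib

section
/- For every natural number n ≥ 2, 1 - (1 - 1/(n-1))^n - n·(1/(n-1))·(1 - 1/(n-1))^(n-1) ≥ 1 - 2/e. -/
theorem stmt_4 (n : ℕ) (hn : 2 ≤ n) :
    1 - (1 - 1 / ((n : ℝ) - 1)) ^ n - n * (1 / ((n : ℝ) - 1)) * (1 - 1 / ((n : ℝ) - 1)) ^ (n - 1)
      ≥ 1 - 2 / Real.exp 1 := by
  obtain ⟨m, rfl⟩ : ∃ m, n = m + 1 := ⟨n - 1, by omega⟩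
  have hm1 : 1 ≤ m := by omega
  have hmR : (1:ℝ) ≤ (m:ℝ) := by exact_mod_cast hm1
  have hmpos : (0:ℝ) < m := by linarith
  have hcast : ((m+1 : ℕ) : ℝ) - 1 = (m:ℝ) := by push_cast; ring
  have hp0 : (0:ℝ) ≤ 1 - 1/(m:ℝ) := by
    rw [sub_nonneg, div_le_one hmpos]; exact hmR
  have key : (1 - 1/(m:ℝ))^m ≤ 1 / Real.exp 1 := by
    have h1 : 1 - 1/(m:ℝ) ≤ Real.exp (-(1/m)) := by
      have := Real.add_one_le_exp (-(1/(m:ℝ))); linarith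
    calc (1 - 1/(m:ℝ))^m ≤ (Real.exp (-(1/m)))^m := pow_le_pow_left₀ hp0 h1 m
      _ = Real.exp (-(1/m) * m) := by rw [← Real.exp_nat_mul]; ring_nf
      _ = Real.exp (-1) := by
          congr 1
          field_simp
      _ = 1 / Real.exp 1 := by rw [Real.exp_neg]; field_simp
  rw [hcast]
  simp only [Nat.add_sub_cancel]
  have hexpand : (1 - 1/(m:ℝ))^(m+1) + ((m+1 : ℕ):ℝ) * (1/(m:ℝ)) * (1-1/(m:ℝ))^m
      = 2 * (1-1/(m:ℝ))^m := by
    push_cast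
    rw [pow_succ]
    field_simp
    ring
  have h2 : 2 / Real.exp 1 = 2 * (1 / Real.exp 1) := by ring
  linarith
end

section
/- Let n ≥ 2 and let X_1, …, X_n be i.i.d. real-valued random variables with P[X_1 ≥ H] ≥ 1/(n-1) and P[X_1 > H] ≤ 1/(n-1), for a real number H. Then the probability that at least two of the X_i are ≥ H is at least 1 - 2/e. -/
open MeasureTheory ProbabilityTheory
open scoped Classical
open scoped ENNReal

lemma aux_real_stmt7 (m : ℕ) (hm : 1 ≤ m) (p : ℝ) (hp1 : 1/(m:ℝ) ≤ p) (hp2 : p ≤ 1) :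
    (1-p)^m * (1 + m*p) ≤ 2 / Real.exp 1 := by
  have hm0 : (0:ℝ) < m := by exact_mod_cast hm
  have hderiv : ∀ x : ℝ, HasDerivAt (fun x : ℝ => (1-x)^m * (1 + m*x))
      ((m:ℝ) * (1-x)^(m-1) * (-1) * (1 + m*x) + (1-x)^m * m) x := by
    intro x
    have h1 : HasDerivAt (fun x : ℝ => 1 - x) (-1) x := (hasDerivAt_id x).const_sub 1
    have h2 := h1.fun_pow m
    have h3 : HasDerivAt (fun x : ℝ => 1 + m*x) m x := by
      simpa using ((hasDerivAt_id x).const_mul (m:ℝ)).const_add 1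
    simpa [mul_comm, mul_assoc, mul_left_comm] using h2.fun_mul h3
  have hanti : AntitoneOn (fun x : ℝ => (1-x)^m * (1 + m*x)) (Set.Icc (1/(m:ℝ)) 1) := by
    apply antitoneOn_of_deriv_nonpos (convex_Icc _ _)
    · exact Continuous.continuousOn (by continuity)
    · intro x hx
      exact (hderiv x).differentiableAt.differentiableWithinAt
    · intro x hx
      rw [interior_Icc] at hx
      rw [(hderiv x).deriv]
      have hx0 : 0 < x := lt_of_le_of_lt (by positivity) hx.1
      have hx1 : x < 1 := hx.2
      have hpow : (1-x)^m = (1-x)^(m-1) * (1-x) := by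
        rw [← pow_succ]; congr 1; omega
      rw [hpow]
      have h1x : (0:ℝ) ≤ 1 - x := by linarith
      have hppos : (0:ℝ) ≤ (1-x)^(m-1) := by positivity
      nlinarith [mul_nonneg (mul_nonneg hm0.le hppos) hx0.le]
  have hm1 : (1:ℝ)/m ≤ 1 := by rw [div_le_one hm0]; exact_mod_cast hm
  have hmem1 : (1/(m:ℝ)) ∈ Set.Icc (1/(m:ℝ)) 1 := ⟨le_rfl, hm1⟩
  have hmemp : p ∈ Set.Icc (1/(m:ℝ)) 1 := ⟨hp1, hp2⟩
  have key := hanti hmem1 hmemp hp1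
  simp only at key
  have hsimp : (m:ℝ) * (1/m) = 1 := by field_simp
  have hexp : (1 - 1/(m:ℝ))^m ≤ 1 / Real.exp 1 := by
    have h1 : 1 - 1/(m:ℝ) ≤ Real.exp (-(1/m)) := by
      have := Real.add_one_le_exp (-(1/(m:ℝ)))
      linarith
    have h2 : (1 - 1/(m:ℝ))^m ≤ (Real.exp (-(1/m)))^m :=
      pow_le_pow_left₀ (by linarith) h1 m
    calc (1 - 1/(m:ℝ))^m ≤ (Real.exp (-(1/m)))^m := h2
      _ = Real.exp (-(1/m) * m) := by rw [← Real.exp_nat_mul]; ring_nf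
      _ = Real.exp (-1) := by congr 1; field_simp
      _ = 1 / Real.exp 1 := by rw [Real.exp_neg]; ring
  calc (1-p)^m * (1 + m*p) ≤ (1 - 1/(m:ℝ))^m * (1 + m*(1/m)) := key
    _ = (1 - 1/(m:ℝ))^m * 2 := by rw [hsimp]; ring
    _ ≤ (1 / Real.exp 1) * 2 := mul_le_mul_of_nonneg_right hexp (by norm_num)
    _ = 2 / Real.exp 1 := by ring

theorem stmt_7 {Ω : Type*} [MeasurableSpace Ω] (μ : Measure Ω) [IsProbabilityMeasure μ]
    (n : ℕ) (hn : 2 ≤ n) (X : Fin n → Ω → ℝ) (hmeas : ∀ i, Measurable (X i))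
    (hindep : iIndepFun X μ)
    (hident : ∀ i j, μ.map (X i) = μ.map (X j))
    (H : ℝ)
    (hlow : ∀ i, 1 / ((n : ℝ) - 1) ≤ (μ {ω | H ≤ X i ω}).toReal)
    (hups : ∀ i, (μ {ω | H < X i ω}).toReal ≤ 1 / ((n : ℝ) - 1)) :
    1 - 2 / Real.exp 1
      ≤ (μ {ω | 2 ≤ (Finset.univ.filter fun i => H ≤ X i ω).card}).toReal := by
  have i0 : Fin n := ⟨0, by omega⟩
  set A : Fin n → Set Ω := fun i => X i ⁻¹' Set.Ici H with hA
  have hAmeas : ∀ i, MeasurableSet (A i) := fun i => (hmeas i) measurableSet_Ici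
  set p : ℝ≥0∞ := μ (A i0) with hp
  have hpi : ∀ i, μ (A i) = p := by
    intro i
    have h0 := hident i i0
    have h1 : μ.map (X i) (Set.Ici H) = μ.map (X i0) (Set.Ici H) := by rw [h0]
    rwa [Measure.map_apply (hmeas i) measurableSet_Ici,
         Measure.map_apply (hmeas i0) measurableSet_Ici] at h1
  have hpci : ∀ i, μ (A i)ᶜ = 1 - p := by
    intro i
    rw [prob_compl_eq_one_sub (hAmeas i), hpi i]
  -- independence
  have hinter : ∀ T : Finset (Fin n),
      μ (⋂ i, (if i ∈ T then A i else (A i)ᶜ)) = p ^ T.card * (1-p) ^ (n - T.card) := by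
    intro T
    rw [hindep.meas_iInter]
    · calc ∏ i, μ (if i ∈ T then A i else (A i)ᶜ)
          = ∏ i, (if i ∈ T then p else 1 - p) := by
            apply Finset.prod_congr rfl
            intro i _
            by_cases h : i ∈ T <;> simp [h, hpi, hpci]
        _ = (∏ i ∈ T, (p:ℝ≥0∞)) * ∏ i ∈ Tᶜ, (1-p) := by
            rw [← Finset.prod_mul_prod_compl T]
            congr 1
            · exact Finset.prod_congr rfl fun i hi => by simp [hi]
            · exact Finset.prod_congr rfl fun i hi => by
                simp [Finset.mem_compl.mp hi]
        _ = p ^ T.card * (1-p) ^ (n - T.card) := by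
            rw [Finset.prod_const, Finset.prod_const, Finset.card_compl,
              Fintype.card_fin]
    · intro i
      by_cases h : i ∈ T
      · simp only [h, if_true]
        exact ⟨Set.Ici H, measurableSet_Ici, rfl⟩
      · simp only [h, if_false]
        exact ⟨(Set.Ici H)ᶜ, measurableSet_Ici.compl, rfl⟩
  -- event decomposition
  have hSev : ∀ T : Finset (Fin n),
      {ω | (Finset.univ.filter fun i => H ≤ X i ω) = T} =
        ⋂ i, (if i ∈ T then A i else (A i)ᶜ) := by
    intro T
    ext ω
    simp only [Set.mem_setOf_eq, Set.mem_iInter, Finset.ext_iff, Finset.mem_filter,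
      Finset.mem_univ, true_and, hA]
    constructor
    · intro h i
      by_cases hi : i ∈ T
      · simp only [hi, if_true, Set.mem_preimage, Set.mem_Ici]
        exact (h i).mpr hi
      · simp only [hi, if_false, Set.mem_compl_iff, Set.mem_preimage, Set.mem_Ici]
        exact fun hle => hi ((h i).mp hle)
    · intro h i
      have hh := h i
      by_cases hi : i ∈ T
      · simp only [hi, if_true, Set.mem_preimage, Set.mem_Ici] at hh
        exact ⟨fun _ => hi, fun _ => hh⟩
      · simp only [hi, if_false, Set.mem_compl_iff, Set.mem_preimage, Set.mem_Ici] at hh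
        exact ⟨fun hle => absurd hle hh, fun hmem => absurd hmem hi⟩
  have hset : {ω | ¬ 2 ≤ (Finset.univ.filter fun i => H ≤ X i ω).card}
      = ⋃ T ∈ Finset.univ.filter (fun T : Finset (Fin n) => T.card ≤ 1),
          {ω | (Finset.univ.filter fun i => H ≤ X i ω) = T} := by
    ext ω
    simp only [Set.mem_setOf_eq, Set.mem_iUnion, Finset.mem_filter, Finset.mem_univ,
      true_and, not_le]
    constructor
    · intro h
      exact ⟨_, by omega, rfl⟩
    · rintro ⟨T, hT, hEq⟩
      rw [hEq]; omega
  have hTmeas : ∀ T : Finset (Fin n),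
      MeasurableSet {ω | (Finset.univ.filter fun i => H ≤ X i ω) = T} := by
    intro T
    rw [hSev T]
    exact MeasurableSet.iInter fun i => by
      by_cases h : i ∈ T <;> simp [h, hAmeas i, (hAmeas i).compl]
  have hCmeas : MeasurableSet {ω | ¬ 2 ≤ (Finset.univ.filter fun i => H ≤ X i ω).card} := by
    rw [hset]
    exact Finset.measurableSet_biUnion _ fun T _ => hTmeas T
  have hCval : μ {ω | ¬ 2 ≤ (Finset.univ.filter fun i => H ≤ X i ω).card}
      = (1-p) ^ n + n * (p * (1-p) ^ (n-1)) := by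
    rw [hset, measure_biUnion_finset]
    · have hval : ∀ T : Finset (Fin n),
          μ {ω | (Finset.univ.filter fun i => H ≤ X i ω) = T}
            = p ^ T.card * (1-p) ^ (n - T.card) := fun T => by rw [hSev T, hinter T]
      rw [Finset.sum_congr rfl fun T hT => hval T]
      have hsplit : (Finset.univ.filter (fun T : Finset (Fin n) => T.card ≤ 1))
          = Finset.univ.filter (fun T : Finset (Fin n) => T.card = 0)
            ∪ Finset.univ.filter (fun T : Finset (Fin n) => T.card = 1) := by
        rw [← Finset.filter_or]
        apply Finset.filter_congr
        intro T _
        constructor <;> intro h <;> omega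
      rw [hsplit, Finset.sum_union]
      · have h0 : Finset.univ.filter (fun T : Finset (Fin n) => T.card = 0)
            = Finset.univ.powersetCard 0 := by
          rw [Finset.powersetCard_eq_filter, Finset.powerset_univ]
        have h1 : Finset.univ.filter (fun T : Finset (Fin n) => T.card = 1)
            = Finset.univ.powersetCard 1 := by
          rw [Finset.powersetCard_eq_filter, Finset.powerset_univ]
        rw [h0, h1]
        have e0 : ∑ T ∈ (Finset.univ : Finset (Fin n)).powersetCard 0,
            p ^ T.card * (1-p) ^ (n - T.card)
            = ∑ _T ∈ (Finset.univ : Finset (Fin n)).powersetCard 0,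
                p ^ 0 * (1-p) ^ (n - 0) := by
          apply Finset.sum_congr rfl
          intro T hT
          rw [Finset.mem_powersetCard_univ] at hT
          rw [hT]
        have e1 : ∑ T ∈ (Finset.univ : Finset (Fin n)).powersetCard 1,
            p ^ T.card * (1-p) ^ (n - T.card)
            = ∑ _T ∈ (Finset.univ : Finset (Fin n)).powersetCard 1,
                p ^ 1 * (1-p) ^ (n - 1) := by
          apply Finset.sum_congr rfl
          intro T hT
          rw [Finset.mem_powersetCard_univ] at hT
          rw [hT]
        rw [e0, e1, Finset.sum_const, Finset.sum_const, Finset.card_powersetCard,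
          Finset.card_powersetCard, Finset.card_univ, Fintype.card_fin,
          Nat.choose_zero_right, Nat.choose_one_right]
        simp [pow_one, mul_comm, nsmul_eq_mul]
      · rw [Finset.disjoint_filter]
        intro T _ h0
        omega
    · intro T1 h1 T2 h2 hne
      simp only [Function.onFun]
      rw [Set.disjoint_left]
      intro ω hω1 hω2
      exact hne (hω1.symm.trans hω2)
    · intro T _
      exact hTmeas T
  -- from complement to the event
  have hEset : {ω | 2 ≤ (Finset.univ.filter fun i => H ≤ X i ω).card}
      = {ω | ¬ 2 ≤ (Finset.univ.filter fun i => H ≤ X i ω).card}ᶜ := by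
    ext ω; simp; constructor <;> intro h <;> omega
  have hEval : μ {ω | 2 ≤ (Finset.univ.filter fun i => H ≤ X i ω).card}
      = 1 - ((1-p) ^ n + n * (p * (1-p) ^ (n-1))) := by
    rw [hEset, prob_compl_eq_one_sub hCmeas, hCval]
  -- pass to real numbers
  have hple : p ≤ 1 := prob_le_one
  have h1ple : (1 : ℝ≥0∞) - p ≤ 1 := tsub_le_self
  have hqnt : (1 : ℝ≥0∞) - p ≠ ⊤ := (lt_of_le_of_lt h1ple ENNReal.one_lt_top).ne
  have hpnt : p ≠ ⊤ := (lt_of_le_of_lt hple ENNReal.one_lt_top).ne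
  have hC1 : ((1:ℝ≥0∞)-p) ^ n ≠ ⊤ := ENNReal.pow_ne_top hqnt
  have hC2 : (n : ℝ≥0∞) * (p * (1-p) ^ (n-1)) ≠ ⊤ :=
    ENNReal.mul_ne_top (ENNReal.natCast_ne_top n)
      (ENNReal.mul_ne_top hpnt (ENNReal.pow_ne_top hqnt))
  set pr : ℝ := p.toReal with hpr
  have hq : ((1:ℝ≥0∞) - p).toReal = 1 - pr := by
    rw [ENNReal.toReal_sub_of_le hple ENNReal.one_ne_top, ENNReal.toReal_one]
  have hCreal : ((1-p) ^ n + n * (p * (1-p) ^ (n-1))).toReal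
      = (1 - pr) ^ n + n * (pr * (1 - pr) ^ (n-1)) := by
    rw [ENNReal.toReal_add hC1 hC2, ENNReal.toReal_pow, ENNReal.toReal_mul,
      ENNReal.toReal_mul, ENNReal.toReal_pow, ENNReal.toReal_natCast, hq]
  have hCle1 : ((1-p) ^ n + n * (p * (1-p) ^ (n-1))) ≤ 1 := by
    rw [← hCval]
    exact prob_le_one
  have htoReal : (μ {ω | 2 ≤ (Finset.univ.filter fun i => H ≤ X i ω).card}).toReal
      = 1 - ((1 - pr) ^ n + n * (pr * (1 - pr) ^ (n-1))) := by
    rw [hEval, ENNReal.toReal_sub_of_le hCle1 ENNReal.one_ne_top, ENNReal.toReal_one,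
      hCreal]
  rw [htoReal]
  -- now the real inequality
  set m : ℕ := n - 1 with hm
  have hm1 : 1 ≤ m := by omega
  have hnm : n = m + 1 := by omega
  have hcast : ((n:ℝ) - 1) = (m:ℝ) := by
    rw [hnm]; push_cast; ring
  have hAeq : {ω | H ≤ X i0 ω} = A i0 := by
    ext ω; simp [hA, Set.mem_preimage, Set.mem_Ici]
  have hp1 : 1/(m:ℝ) ≤ pr := by
    have := hlow i0
    rw [hcast] at this
    rwa [hAeq] at this
  have hp2 : pr ≤ 1 := by
    rw [hpr]
    exact ENNReal.toReal_le_of_le_ofReal (by norm_num) (by simpa using hple)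
  have hkey := aux_real_stmt7 m hm1 pr hp1 hp2
  have hexpand : (1 - pr) ^ n + n * (pr * (1 - pr) ^ (n-1))
      = (1-pr)^m * (1 + m*pr) := by
    rw [hnm]
    have : m + 1 - 1 = m := by omega
    rw [this]
    push_cast
    ring
  rw [hexpand]
  linarith
end
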